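/- Let f be a modular form of weight k (a weight-k element of the subalgebra ℂ[G_4, G_6] ⊂ QMod). If the Fourier coefficients [f]_{q^ℓ} vanish for all ℓ ≤ ⌊k/12⌋, then f = 0. -/

import Mathlib

open MvPolynomial

/-- The Eisenstein series `G₄ = 1/240 + Σ σ₃(n) qⁿ` as a formal power series. -/
noncomputable def stmt7G4 : PowerSeries ℂ :=
  PowerSeries.mk fun n => if n = 0 then 1 / 240 else (ArithmeticFunction.sigma 3 n : ℂ)

/-- The Eisenstein series `G₆ = -1/504 + Σ σ₅(n) qⁿ` as a formal power series. -/
noncomputable def stmt7G6 : PowerSeries ℂ :=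
  PowerSeries.mk fun n => if n = 0 then -1 / 504 else (ArithmeticFunction.sigma 5 n : ℂ)

noncomputable section Stmt7Aux

/-- Constant term of `G₄`. -/
def s7al : ℂ := 1/240
/-- Constant term of `G₆`. -/
def s7be : ℂ := -1/504

/-- A polynomial proportional to the discriminant: it is weighted homogeneous of weight 12 and
vanishes at `(s7al, s7be)`. -/
def s7D : MvPolynomial (Fin 2) ℂ := C (s7be^2) * X 0 ^ 3 - C (s7al^3) * X 1 ^ 2

lemma s7albe : s7al ≠ 0 ∧ s7be ≠ 0 := by constructor <;> simp [s7al, s7be]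

lemma s7chain (a b t : ℕ) : s7D ∣ C (s7be^(2*t)) * (X 0^(a+3*t) * X 1^b)
    - C (s7al^(3*t)) * (X 0^a * X 1^(b+2*t)) := by
  induction t generalizing a with
  | zero => simp
  | succ t IH =>
    have IH' := IH (a+3)
    have key : C (s7be^(2*(t+1))) * (X 0^(a+3*(t+1)) * X 1^b)
        - C (s7al^(3*(t+1))) * (X 0^a * X 1^(b+2*(t+1)))
        = C (s7be^2) * (C (s7be^(2*t)) * (X 0^(a+3+3*t) * X 1^b)
            - C (s7al^(3*t)) * (X 0^(a+3) * X 1^(b+2*t)))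
          + C (s7al^(3*t)) * ((X 0^a * X 1^(b+2*t)) * s7D) := by
      simp only [s7D, map_mul, map_pow]
      ring
    rw [key]
    exact dvd_add (IH'.mul_left _) ((dvd_mul_left _ _).mul_left _)

lemma s7red (a ε t : ℕ) : s7D ∣ C (s7al^(a+3*t) * s7be^ε) * (X 0^a * X 1^(ε+2*t))
    - C (s7al^a * s7be^(ε+2*t)) * (X 0^(a+3*t) * X 1^ε) := by
  obtain ⟨q, hq⟩ := s7chain a ε t
  refine ⟨-(C (s7al^a * s7be^ε)) * q, ?_⟩
  have h2 : C (s7be^(2*t)) * (X 0^(a+3*t) * X 1^ε)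
      - C (s7al^(3*t)) * ((X 0 : MvPolynomial (Fin 2) ℂ)^a * X 1^(ε+2*t)) = s7D * q := hq
  simp only [map_mul, map_pow] at h2 ⊢
  linear_combination (-(C s7al^a * C s7be^ε)) * h2

lemma s7mono (m : Fin 2 →₀ ℕ) (c : ℂ) :
    (monomial m c : MvPolynomial (Fin 2) ℂ) = C c * (X 0 ^ (m 0) * X 1 ^ (m 1)) := by
  rw [monomial_eq, Finsupp.prod_fintype]
  · rw [Fin.prod_univ_two]
  · intro i; exact pow_zero _

lemma s7eval (m : Fin 2 →₀ ℕ) (c : ℂ) :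
    eval ![s7al, s7be] (monomial m c) = c * (s7al ^ (m 0) * s7be ^ (m 1)) := by
  rw [eval_monomial, Finsupp.prod_fintype]
  · rw [Fin.prod_univ_two]; simp [mul_assoc]
  · intro i; exact pow_zero _

lemma s7weight (k : ℕ) (m : Fin 2 →₀ ℕ)
    (h : Finsupp.weight (![4,6] : Fin 2 → ℕ) m = k) : 4 * m 0 + 6 * m 1 = k := by
  rw [Finsupp.weight_apply, Finsupp.sum_fintype] at h
  · rw [Fin.sum_univ_two] at h
    simp only [Matrix.cons_val_zero, Matrix.cons_val_one, Matrix.head_cons, smul_eq_mul] at h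
    omega
  · intro i; exact zero_smul _ _

/-- A weighted homogeneous polynomial vanishing at `(s7al, s7be)` is divisible by `s7D`. -/
lemma s7div (k : ℕ) (P : MvPolynomial (Fin 2) ℂ)
    (hP : P ∈ weightedHomogeneousSubmodule ℂ (![4,6] : Fin 2 → ℕ) k)
    (h0 : eval ![s7al, s7be] P = 0) : s7D ∣ P := by
  set ε := (k/2) % 2 with hε
  set a0 := (k - 6*ε)/4 with ha0
  have key : s7D ∣ C (s7al^a0 * s7be^ε) * P
      - C (eval ![s7al, s7be] P) * (X 0^a0 * X 1^ε) := by
    rw [← support_sum_monomial_coeff P]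
    rw [map_sum (eval ![s7al, s7be]), map_sum (C : ℂ →+* MvPolynomial (Fin 2) ℂ),
      Finset.mul_sum, Finset.sum_mul, ← Finset.sum_sub_distrib]
    apply Finset.dvd_sum
    intro m hm
    have hw : 4 * m 0 + 6 * m 1 = k :=
      s7weight k m (hP (mem_support_iff.mp hm))
    have h3 : m 1 % 2 + 2 * (m 1 / 2) = m 1 := Nat.mod_add_div (m 1) 2
    have h1 : m 1 % 2 = ε := by omega
    have h2 : m 0 + 3 * (m 1 / 2) = a0 := by omega
    have hr := s7red (m 0) (m 1 % 2) (m 1 / 2)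
    rw [h3, h2, h1] at hr
    have heq : C (s7al^a0 * s7be^ε) * (monomial m) (coeff m P)
        - C (eval ![s7al, s7be] ((monomial m) (coeff m P))) * (X 0^a0 * X 1^ε)
        = C (coeff m P) * (C (s7al^a0 * s7be^ε) * (X 0^(m 0) * X 1^(m 1))
            - C (s7al^(m 0) * s7be^(m 1)) * (X 0^a0 * X 1^ε)) := by
      rw [s7eval, s7mono]
      simp only [map_mul, map_pow]
      ring
    rw [heq]
    exact hr.mul_left _
  rw [h0, map_zero, zero_mul, sub_zero] at key
  have hc : s7al^a0 * s7be^ε ≠ 0 :=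
    mul_ne_zero (pow_ne_zero _ s7albe.1) (pow_ne_zero _ s7albe.2)
  have : P = C (s7al^a0 * s7be^ε)⁻¹ * (C (s7al^a0 * s7be^ε) * P) := by
    rw [← mul_assoc, ← map_mul, inv_mul_cancel₀ hc, map_one, one_mul]
  rw [this]
  exact key.mul_left _

lemma s7Dwh : IsWeightedHomogeneous (![4,6] : Fin 2 → ℕ) s7D 12 := by
  have h1 : IsWeightedHomogeneous (![4,6] : Fin 2 → ℕ)
      (C (s7be^2) * X 0 ^ 3 : MvPolynomial (Fin 2) ℂ) 12 := by
    rw [C_mul_X_pow_eq_monomial]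
    apply isWeightedHomogeneous_monomial
    simp [Finsupp.weight_apply, Finsupp.sum_single_index]
  have h2 : IsWeightedHomogeneous (![4,6] : Fin 2 → ℕ)
      (C (s7al^3) * X 1 ^ 2 : MvPolynomial (Fin 2) ℂ) 12 := by
    rw [C_mul_X_pow_eq_monomial]
    apply isWeightedHomogeneous_monomial
    simp [Finsupp.weight_apply, Finsupp.sum_single_index]
  exact Submodule.sub_mem (weightedHomogeneousSubmodule ℂ (![4,6] : Fin 2 → ℕ) 12) h1 h2

lemma s7core (k : ℕ) (S : MvPolynomial (Fin 2) ℂ)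
    (hmem : s7D * S ∈ weightedHomogeneousSubmodule ℂ (![4,6] : Fin 2 → ℕ) k)
    (hS : ∀ m ∈ S.support, ¬ (12 + Finsupp.weight (![4,6] : Fin 2 → ℕ) m = k)) :
    s7D * S = 0 := by
  classical
  by_contra hne
  obtain ⟨m, hm⟩ := Finset.nonempty_iff_ne_empty.mpr
    (fun h => hne (support_eq_empty.mp h))
  have hwk : Finsupp.weight (![4,6] : Fin 2 → ℕ) m = k := hmem (mem_support_iff.mp hm)
  have hmm := support_mul s7D S hm
  rw [Finset.mem_add] at hmm
  obtain ⟨m₁, h₁, m₂, h₂, rfl⟩ := hmm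
  have hw1 : Finsupp.weight (![4,6] : Fin 2 → ℕ) m₁ = 12 := s7Dwh (mem_support_iff.mp h₁)
  rw [map_add, hw1] at hwk
  exact hS m₂ h₂ hwk

lemma s7small (k : ℕ) (hk : k < 12) (Q : MvPolynomial (Fin 2) ℂ)
    (h : s7D * Q ∈ weightedHomogeneousSubmodule ℂ (![4,6] : Fin 2 → ℕ) k) :
    s7D * Q = 0 :=
  s7core k Q h (fun m _ => by omega)

lemma s7extract (k : ℕ) (hk : 12 ≤ k) (Q : MvPolynomial (Fin 2) ℂ)
    (h : s7D * Q ∈ weightedHomogeneousSubmodule ℂ (![4,6] : Fin 2 → ℕ) k) :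
    ∃ Q' ∈ weightedHomogeneousSubmodule ℂ (![4,6] : Fin 2 → ℕ) (k-12), s7D * Q = s7D * Q' := by
  classical
  set Q' := weightedHomogeneousComponent (![4,6] : Fin 2 → ℕ) (k-12) Q with hQ'
  refine ⟨Q', weightedHomogeneousComponent_mem _ Q _, ?_⟩
  have hwh : s7D * Q' ∈ weightedHomogeneousSubmodule ℂ (![4,6] : Fin 2 → ℕ) k := by
    have := s7Dwh.mul
      (weightedHomogeneousComponent_isWeightedHomogeneous (w := (![4,6] : Fin 2 → ℕ)) (k-12) Q)
    rwa [show 12 + (k-12) = k by omega] at this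
  have hz : s7D * (Q - Q') = 0 := by
    apply s7core k _ (by rw [mul_sub]; exact Submodule.sub_mem _ h hwh)
    intro m hm hcon
    have hw : Finsupp.weight (![4,6] : Fin 2 → ℕ) m = k - 12 := by omega
    have : coeff m (Q - Q') = 0 := by
      rw [coeff_sub, hQ', coeff_weightedHomogeneousComponent, if_pos hw, sub_self]
    exact mem_support_iff.mp hm this
  rw [mul_sub, sub_eq_zero] at hz
  exact hz

lemma s7cc (P : MvPolynomial (Fin 2) ℂ) :
    PowerSeries.constantCoeff (R := ℂ) (aeval ![stmt7G4, stmt7G6] P) = eval ![s7al, s7be] P := by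
  rw [aeval_def, eval₂_comp_left (PowerSeries.constantCoeff (R := ℂ))]
  have h1 : (PowerSeries.constantCoeff (R := ℂ)).comp (algebraMap ℂ (PowerSeries ℂ)) = RingHom.id ℂ := by
    ext x; simp [PowerSeries.algebraMap_apply]
  have h2 : (PowerSeries.constantCoeff (R := ℂ)) ∘ ![stmt7G4, stmt7G6] = ![s7al, s7be] := by
    funext i
    fin_cases i <;>
      simp [stmt7G4, stmt7G6, PowerSeries.constantCoeff_mk, s7al, s7be]
  rw [h1, h2]
  rfl

lemma s7G4one : PowerSeries.coeff 1 stmt7G4 = 1 := by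
  rw [stmt7G4, PowerSeries.coeff_mk]
  simp [ArithmeticFunction.sigma_apply]

lemma s7G6one : PowerSeries.coeff 1 stmt7G6 = 1 := by
  rw [stmt7G6, PowerSeries.coeff_mk]
  simp [ArithmeticFunction.sigma_apply]

lemma s7Dcoeff : PowerSeries.coeff 1 (aeval ![stmt7G4, stmt7G6] s7D)
    = 3 * s7al^2 * s7be^2 - 2 * s7al^3 * s7be := by
  have hD : aeval ![stmt7G4, stmt7G6] s7D
      = PowerSeries.C (R := ℂ) (s7be^2) * stmt7G4^3 - PowerSeries.C (R := ℂ) (s7al^3) * stmt7G6^2 := by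
    simp [s7D, map_sub, map_mul, map_pow, PowerSeries.algebraMap_apply]
  rw [hD, map_sub, PowerSeries.coeff_C_mul, PowerSeries.coeff_C_mul,
    PowerSeries.coeff_one_pow, PowerSeries.coeff_one_pow, s7G4one, s7G6one]
  have c4 : PowerSeries.constantCoeff (R := ℂ) stmt7G4 = s7al := rfl
  have c6 : PowerSeries.constantCoeff (R := ℂ) stmt7G6 = s7be := rfl
  rw [c4, c6]
  ring

lemma s7main : ∀ k : ℕ, ∀ P : MvPolynomial (Fin 2) ℂ,
    P ∈ weightedHomogeneousSubmodule ℂ (![4,6] : Fin 2 → ℕ) k →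
    (∀ ℓ : ℕ, ℓ ≤ k / 12 → PowerSeries.coeff ℓ (aeval ![stmt7G4, stmt7G6] P) = 0) →
    aeval ![stmt7G4, stmt7G6] P = 0 := by
  intro k
  induction k using Nat.strong_induction_on with
  | _ k IH =>
  intro P hP hvan
  have h0 : eval ![s7al, s7be] P = 0 := by
    rw [← s7cc, ← PowerSeries.coeff_zero_eq_constantCoeff_apply]
    exact hvan 0 (Nat.zero_le _)
  obtain ⟨Q, hPQ⟩ := s7div k P hP h0
  rcases lt_or_ge k 12 with hk | hk
  · have hz : s7D * Q = 0 := s7small k hk Q (by rw [← hPQ]; exact hP)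
    rw [hPQ, hz, map_zero]
  · obtain ⟨Q', hQ'mem, hEq⟩ := s7extract k hk Q (by rw [← hPQ]; exact hP)
    set g := aeval ![stmt7G4, stmt7G6] Q' with hg
    have hf : aeval ![stmt7G4, stmt7G6] P = (aeval ![stmt7G4, stmt7G6] s7D) * g := by
      rw [hPQ, hEq, map_mul]
    have hD0 : PowerSeries.constantCoeff (R := ℂ) (aeval ![stmt7G4, stmt7G6] s7D) = 0 := by
      rw [s7cc]
      simp [s7D]
      ring
    obtain ⟨h, hh⟩ := PowerSeries.X_dvd_iff.mpr hD0
    have hγ : PowerSeries.constantCoeff (R := ℂ) h = 3 * s7al^2 * s7be^2 - 2 * s7al^3 * s7be := by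
      have h1 : PowerSeries.coeff 1 (PowerSeries.X * h) = PowerSeries.constantCoeff (R := ℂ) h :=
        (PowerSeries.coeff_succ_X_mul 0 h).trans
          (PowerSeries.coeff_zero_eq_constantCoeff_apply h)
      rw [← hh, s7Dcoeff] at h1
      exact h1.symm
    have hγne : PowerSeries.constantCoeff (R := ℂ) h ≠ 0 := by
      rw [hγ, s7al, s7be]
      norm_num
    have hhg : ∀ ℓ : ℕ, ℓ ≤ k / 12 - 1 → PowerSeries.coeff ℓ (h * g) = 0 := by
      intro ℓ hℓ
      have hv := hvan (ℓ + 1) (by omega)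
      rw [hf, hh, mul_assoc] at hv
      rwa [PowerSeries.coeff_succ_X_mul ℓ (h * g)] at hv
    have hgco : ∀ ℓ : ℕ, ℓ ≤ k / 12 - 1 → PowerSeries.coeff ℓ g = 0 := by
      intro ℓ hℓ
      have hinv : g = h⁻¹ * (h * g) := by
        rw [← mul_assoc, PowerSeries.inv_mul_cancel h hγne, one_mul]
      rw [hinv, PowerSeries.coeff_mul]
      apply Finset.sum_eq_zero
      intro p hp
      have hple : p.2 ≤ ℓ := by
        have := Finset.HasAntidiagonal.mem_antidiagonal.mp hp
        omega
      rw [hhg p.2 (le_trans hple hℓ), mul_zero]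
    have hzero : g = 0 := by
      apply IH (k - 12) (by omega) Q' hQ'mem
      intro ℓ hℓ
      exact hgco ℓ (by omega)
    rw [hf, hzero, mul_zero]

end Stmt7Aux

/-- Let `f` be a modular form of weight `k` for `SL₂(ℤ)`, i.e. a weighted homogeneous
polynomial of weight `k` in `G₄, G₆` (weights `4` and `6`), identified with its
`q`-expansion.  If the Fourier coefficients `[f]_{q^ℓ}` vanish for all `ℓ ≤ ⌊k/12⌋`,
then `f = 0`. -/
theorem stmt_7 (k : ℕ) (P : MvPolynomial (Fin 2) ℂ)
    (hP : P ∈ weightedHomogeneousSubmodule ℂ (![4, 6] : Fin 2 → ℕ) k)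
    (f : PowerSeries ℂ) (hf : f = aeval ![stmt7G4, stmt7G6] P)
    (hvan : ∀ ℓ : ℕ, ℓ ≤ k / 12 → PowerSeries.coeff ℓ f = 0) :
    f = 0 := by
  subst hf
  exact s7main k P hP hvan
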